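/- Let 𝓗 be a finite family of closed halfspaces in ℝ^d whose total intersection is nonempty, let s be an integer with 1 ≤ s ≤ d, and suppose that every intersection of s members of 𝓗 has dimension d. Then for every subfamily of s + 1 members of 𝓗, the dimension of its intersection is either d or exactly d − s. -/

import Mathlib

open Module Finset RealInnerProductSpace


/-- A closed halfspace in `ℝ^d`. -/
def IsClosedHalfspace {d : ℕ} (S : Set (EuclideanSpace ℝ (Fin d))) : Prop :=
  ∃ (f : EuclideanSpace ℝ (Fin d) →ₗ[ℝ] ℝ) (a : ℝ), f ≠ 0 ∧ S = {x | a ≤ f x}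

/-- The dimension of a subset of `ℝ^d`: the rank of the direction of its affine span. -/
noncomputable def setDim {d : ℕ} (S : Set (EuclideanSpace ℝ (Fin d))) : ℕ :=
  Module.finrank ℝ (affineSpan ℝ S).direction

private lemma interior_strict {d : ℕ} {C : Set (EuclideanSpace ℝ (Fin d))}
    {v : EuclideanSpace ℝ (Fin d)} {a : ℝ} (hv : v ≠ 0)
    (hC : C ⊆ {x | a ≤ ⟪v, x⟫}) {w : EuclideanSpace ℝ (Fin d)} (hw : w ∈ interior C) :
    a < ⟪v, w⟫ := by
  obtain ⟨ε, hε, hball⟩ := Metric.mem_nhds_iff.mp (mem_interior_iff_mem_nhds.mp hw)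
  have hvn : 0 < ‖v‖ := norm_pos_iff.mpr hv
  set δ : ℝ := ε / (2 * ‖v‖) with hδdef
  have hδ : 0 < δ := by positivity
  have hmem : w - δ • v ∈ C := by
    apply hball
    rw [Metric.mem_ball, dist_eq_norm]
    have h2 : w - δ • v - w = -(δ • v) := by abel
    rw [h2, norm_neg, norm_smul, Real.norm_of_nonneg hδ.le, hδdef]
    have h3 : ε / (2 * ‖v‖) * ‖v‖ = ε / 2 := by field_simp
    rw [h3]; linarith
  have h1 : a ≤ ⟪v, w - δ • v⟫ := hC hmem
  rw [inner_sub_right, real_inner_smul_right, real_inner_self_eq_norm_sq] at h1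
  nlinarith [mul_pos hδ (pow_pos hvn 2)]

private lemma setDim_eq_iff_top {d : ℕ} {S : Set (EuclideanSpace ℝ (Fin d))} (hS : S.Nonempty) :
    setDim S = d ↔ affineSpan ℝ S = ⊤ := by
  constructor
  · intro h
    have h0 : ((affineSpan ℝ S : AffineSubspace ℝ (EuclideanSpace ℝ (Fin d))) : Set (EuclideanSpace ℝ (Fin d))).Nonempty := Set.Nonempty.affineSpan (k := ℝ) hS
    rw [← AffineSubspace.direction_eq_top_iff_of_nonempty h0]
    apply Submodule.eq_top_of_finrank_eq
    rw [show Module.finrank ℝ (affineSpan ℝ S).direction = setDim S from rfl, h,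
      finrank_euclideanSpace_fin]
  · intro h
    rw [setDim, h, AffineSubspace.direction_top, finrank_top, finrank_euclideanSpace_fin]


set_option maxHeartbeats 2000000 in
/-- if every intersection of `s` members of a finite family `𝓗` of closed
halfspaces in `ℝ^d` (with nonempty total intersection) has dimension `d`, then every
intersection of `s + 1` members has dimension `d` or exactly `d - s`. -/
theorem dim_inter_succ_halfspaces
    (d : ℕ) (𝓗 : Finset (Set (EuclideanSpace ℝ (Fin d))))
    (hhs : ∀ S ∈ 𝓗, IsClosedHalfspace S)
    (hne : (⋂₀ (𝓗 : Set (Set (EuclideanSpace ℝ (Fin d))))).Nonempty)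
    (s : ℕ) (hs1 : 1 ≤ s) (hsd : s ≤ d)
    (hdim : ∀ G ⊆ 𝓗, G.card = s →
      setDim (⋂₀ (G : Set (Set (EuclideanSpace ℝ (Fin d))))) = d) :
    ∀ G ⊆ 𝓗, G.card = s + 1 →
      setDim (⋂₀ (G : Set (Set (EuclideanSpace ℝ (Fin d))))) = d ∨
      setDim (⋂₀ (G : Set (Set (EuclideanSpace ℝ (Fin d))))) = d - s := by
  classical
  -- choose Riesz vectors
  have hvex : ∀ S : Set (EuclideanSpace ℝ (Fin d)), ∃ (v : EuclideanSpace ℝ (Fin d)) (a : ℝ),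
      S ∈ 𝓗 → (v ≠ 0 ∧ S = {x | a ≤ ⟪v, x⟫}) := by
    intro S
    by_cases hS : S ∈ 𝓗
    · obtain ⟨f, a, hf, hSf⟩ := hhs S hS
      set v := (InnerProductSpace.toDual ℝ (EuclideanSpace ℝ (Fin d))).symm
        (LinearMap.toContinuousLinearMap f) with hv
      have hinner : ∀ x, ⟪v, x⟫ = f x := by
        intro x
        rw [hv, InnerProductSpace.toDual_symm_apply]
        rfl
      refine ⟨v, a, fun _ => ⟨?_, ?_⟩⟩
      · intro h0
        apply hf
        ext x
        rw [← hinner x, h0, inner_zero_left]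
        rfl
      · rw [hSf]
        ext x
        simp only [Set.mem_setOf_eq]
        rw [hinner x]
    · exact ⟨0, 0, fun h => absurd h hS⟩
  choose v a hva using hvex
  obtain ⟨x₀, hx₀⟩ := hne
  intro G hG hGcard
  set K := ⋂₀ (G : Set (Set (EuclideanSpace ℝ (Fin d)))) with hKdef
  have hx₀mem : ∀ ⦃G' : Finset (Set (EuclideanSpace ℝ (Fin d)))⦄, G' ⊆ 𝓗 → x₀ ∈ ⋂₀ (G' : Set (Set (EuclideanSpace ℝ (Fin d)))) := by
    intro G' h
    exact fun S hS => hx₀ S (h hS)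
  have hx₀K : x₀ ∈ K := hx₀mem hG
  have hmemG : ∀ S ∈ G, v S ≠ 0 ∧ S = {x | a S ≤ ⟪v S, x⟫} := fun S hS => hva S (hG hS)
  have hKmem : ∀ x, x ∈ K ↔ ∀ S ∈ G, a S ≤ ⟪v S, x⟫ := by
    intro x
    constructor
    · intro hx S hS
      have := hx S hS
      rw [(hmemG S hS).2] at this
      exact this
    · intro hx S hS
      rw [(hmemG S hS).2]
      exact hx S hS
  -- interior points of s-subfamilies
  have hint : ∀ G' ⊆ 𝓗, G'.card = s →
      ∃ w, w ∈ interior (⋂₀ (G' : Set (Set (EuclideanSpace ℝ (Fin d))))) := by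
    intro G' h1 h2
    have hconv : Convex ℝ (⋂₀ (G' : Set (Set (EuclideanSpace ℝ (Fin d))))) := by
      apply convex_sInter
      intro S hS
      rw [(hva S (h1 hS)).2]
      exact convex_halfSpace_ge (IsLinearMap.mk (fun x y => inner_add_right _ _ _)
        (fun c x => real_inner_smul_right _ _ _)) (a S)
    have := (hconv.interior_nonempty_iff_affineSpan_eq_top).mpr
      ((setDim_eq_iff_top ⟨x₀, hx₀mem h1⟩).mp (hdim G' h1 h2))
    exact this
  -- strictness at interior points
  have hstrict : ∀ G' ⊆ 𝓗, ∀ w, w ∈ interior (⋂₀ (G' : Set (Set (EuclideanSpace ℝ (Fin d))))) →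
      ∀ S ∈ G', a S < ⟪v S, w⟫ := by
    intro G' h1 w hw S hS
    exact interior_strict (hva S (h1 hS)).1
      (by rw [← (hva S (h1 hS)).2]; exact Set.sInter_subset_of_mem hS) hw
  by_cases hA : ∃ x ∈ K, ∀ S ∈ G, a S < ⟪v S, x⟫
  · -- full-dimensional case
    left
    obtain ⟨x, hxK, hx⟩ := hA
    have hopen : IsOpen (⋂ S ∈ G, {y : EuclideanSpace ℝ (Fin d) | a S < ⟪v S, y⟫}) := by
      apply isOpen_biInter_finset
      intro S hS
      exact isOpen_lt continuous_const (Continuous.inner continuous_const continuous_id)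
    have hsub : (⋂ S ∈ G, {y : EuclideanSpace ℝ (Fin d) | a S < ⟪v S, y⟫}) ⊆ K := by
      intro y hy
      rw [hKmem]
      intro S hS
      exact le_of_lt (Set.mem_iInter₂.mp hy S hS)
    have hxint : x ∈ interior K :=
      mem_interior.mpr ⟨_, hsub, hopen, Set.mem_iInter₂.mpr hx⟩
    exact (setDim_eq_iff_top ⟨x, hxK⟩).mpr
      (affineSpan_eq_top_of_nonempty_interior
        ⟨x, interior_mono (subset_convexHull ℝ K) hxint⟩)
  · right
    -- all constraints are tight on K
    have htight : ∀ x ∈ K, ∀ S ∈ G, ⟪v S, x⟫ = a S := by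
      by_contra hcon
      push_neg at hcon
      obtain ⟨p, hpK, T, hT, hTne⟩ := hcon
      have hgt : a T < ⟪v T, p⟫ := lt_of_le_of_ne ((hKmem p).mp hpK T hT) (Ne.symm hTne)
      have herase : G.erase T ⊆ 𝓗 := (Finset.erase_subset T G).trans hG
      obtain ⟨w, hw⟩ := hint (G.erase T) herase
        (by rw [Finset.card_erase_of_mem hT, hGcard]; omega)
      -- build an all-strict point
      set c : ℝ := |⟪v T, w - p⟫| + 1 with hc
      have hcpos : (0:ℝ) < c := by positivity
      set t : ℝ := min (1/2) ((⟪v T, p⟫ - a T) / (2 * c)) with ht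
      have htpos : 0 < t := by
        apply lt_min (by norm_num)
        apply div_pos (by linarith) (by linarith)
      have htle : t ≤ 1/2 := min_le_left _ _
      set q : EuclideanSpace ℝ (Fin d) := p + t • (w - p) with hq
      have hstrictq : ∀ S ∈ G, a S < ⟪v S, q⟫ := by
        intro S hS
        rcases eq_or_ne S T with rfl | hST
        · have h1 : ⟪v S, q⟫ = ⟪v S, p⟫ + t * ⟪v S, w - p⟫ := by
            rw [hq, inner_add_right, real_inner_smul_right]
          have hXc : (0:ℝ) ≤ ⟪v S, w - p⟫ + c := by
            have := neg_abs_le (⟪v S, w - p⟫ : ℝ)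
            rw [hc]; linarith
          have h2 : (0:ℝ) ≤ t * (⟪v S, w - p⟫ + c) := mul_nonneg htpos.le hXc
          have h3 : t * c ≤ (⟪v S, p⟫ - a S) / 2 := by
            calc t * c ≤ ((⟪v S, p⟫ - a S) / (2 * c)) * c :=
                  mul_le_mul_of_nonneg_right (min_le_right _ _) hcpos.le
              _ = (⟪v S, p⟫ - a S) / 2 := by field_simp
          rw [h1]
          nlinarith
        · have hS' : S ∈ G.erase T := Finset.mem_erase.mpr ⟨hST, hS⟩
          have hwS : a S < ⟪v S, w⟫ := hstrict _ herase w hw S hS'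
          have hpS : a S ≤ ⟪v S, p⟫ := (hKmem p).mp hpK S hS
          have h1 : ⟪v S, q⟫ = (1 - t) * ⟪v S, p⟫ + t * ⟪v S, w⟫ := by
            rw [hq, inner_add_right, real_inner_smul_right, inner_sub_right]; ring
          rw [h1]
          nlinarith
      exact hA ⟨q, (hKmem q).mpr fun S hS => le_of_lt (hstrictq S hS), hstrictq⟩
    -- tight case: K = x₀ + Uᗮ with U the span of the normals
    have hGne : G.Nonempty := Finset.card_pos.mp (by omega)
    set U := Submodule.span ℝ (↑(G.image v) : Set (EuclideanSpace ℝ (Fin d))) with hU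
    have hvU : ∀ S ∈ G, v S ∈ U := by
      intro S hS
      apply Submodule.subset_span
      simp only [Finset.coe_image, Set.mem_image, Finset.mem_coe]
      exact ⟨S, hS, rfl⟩
    -- each normal lies in the span of the others
    have hspanW : ∀ S₀ ∈ G, v S₀ ∈ Submodule.span ℝ
        (↑((G.erase S₀).image v) : Set (EuclideanSpace ℝ (Fin d))) := by
      intro S₀ hS₀
      set W := Submodule.span ℝ (↑((G.erase S₀).image v) : Set (EuclideanSpace ℝ (Fin d))) with hW
      set u : EuclideanSpace ℝ (Fin d) :=
        v S₀ - (Submodule.orthogonalProjection W (v S₀) : EuclideanSpace ℝ (Fin d)) with hu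
      have huW : u ∈ Wᗮ := Submodule.sub_starProjection_mem_orthogonal _
      have horth : ∀ S ∈ G.erase S₀, ⟪v S, u⟫ = 0 := by
        intro S hS
        refine (Submodule.mem_orthogonal W u).mp huW (v S) (Submodule.subset_span ?_)
        simp only [Finset.coe_image, Set.mem_image, Finset.mem_coe]
        exact ⟨S, hS, rfl⟩
      have hdecomp : v S₀ = (Submodule.orthogonalProjection W (v S₀) : EuclideanSpace ℝ (Fin d)) + u := by
        rw [hu]; abel
      have hinn0 : ⟪v S₀, u⟫ = ‖u‖^2 := by
        conv_lhs => rw [hdecomp]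
        rw [inner_add_left, real_inner_self_eq_norm_sq,
          (Submodule.mem_orthogonal W u).mp huW _ (Submodule.coe_mem _), zero_add]
      have hmemK : x₀ + u ∈ K := by
        rw [hKmem]
        intro S hS
        have hx₀S : ⟪v S, x₀⟫ = a S := htight x₀ hx₀K S hS
        rcases eq_or_ne S S₀ with rfl | hne'
        · rw [inner_add_right, hx₀S, hinn0]
          nlinarith [sq_nonneg ‖u‖]
        · rw [inner_add_right, hx₀S, horth S (Finset.mem_erase.mpr ⟨hne', hS⟩), add_zero]
      have hzero : ‖u‖^2 = 0 := by
        have h1 := htight _ hmemK S₀ hS₀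
        have hx₀S : ⟪v S₀, x₀⟫ = a S₀ := htight x₀ hx₀K S₀ hS₀
        rw [inner_add_right, hx₀S, hinn0] at h1
        linarith
      have hu0 : u = 0 := norm_eq_zero.mp (by nlinarith [norm_nonneg u])
      have h8 : v S₀ - (Submodule.orthogonalProjection W (v S₀) : EuclideanSpace ℝ (Fin d)) = 0 := by
        rw [← hu]; exact hu0
      have h9 : v S₀ = (Submodule.orthogonalProjection W (v S₀) : EuclideanSpace ℝ (Fin d)) :=
        sub_eq_zero.mp h8
      have h10 := Submodule.coe_mem ((Submodule.orthogonalProjection W) (v S₀))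
      rwa [← h9] at h10
    -- finrank U ≤ s
    have hrle : finrank ℝ U ≤ s := by
      obtain ⟨S₀, hS₀⟩ := hGne
      have hle : U ≤ Submodule.span ℝ
          (↑((G.erase S₀).image v) : Set (EuclideanSpace ℝ (Fin d))) := by
        rw [hU, Submodule.span_le]
        intro x hx
        simp only [Finset.coe_image, Set.mem_image, Finset.mem_coe] at hx
        obtain ⟨S, hS, rfl⟩ := hx
        rcases eq_or_ne S S₀ with rfl | hne'
        · exact hspanW S hS
        · apply Submodule.subset_span
          simp only [Finset.coe_image, Set.mem_image, Finset.mem_coe]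
          exact ⟨S, Finset.mem_erase.mpr ⟨hne', hS⟩, rfl⟩
      calc finrank ℝ U ≤ finrank ℝ (Submodule.span ℝ
            (↑((G.erase S₀).image v) : Set (EuclideanSpace ℝ (Fin d)))) :=
            Submodule.finrank_mono hle
        _ ≤ ((G.erase S₀).image v).card := finrank_span_finset_le_card _
        _ ≤ (G.erase S₀).card := Finset.card_image_le
        _ = s := by rw [Finset.card_erase_of_mem hS₀, hGcard]; omega
    -- finrank U ≥ s via Helly
    have hrge : s ≤ finrank ℝ U := by
      by_contra hlt
      push_neg at hlt
      have hFne : (⋂ S ∈ G, {u : U | (0:ℝ) < ⟪v S, (u : EuclideanSpace ℝ (Fin d))⟫}).Nonempty := by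
        apply Convex.helly_theorem' (𝕜 := ℝ)
        · intro S hS
          exact convex_halfSpace_gt (IsLinearMap.mk
            (fun x y => by rw [Submodule.coe_add, inner_add_right])
            (fun c x => by rw [Submodule.coe_smul, real_inner_smul_right, smul_eq_mul])) 0
        · intro I hIss hIcard
          obtain ⟨G'', hIG'', hG''G, hG''card⟩ :=
            Finset.exists_subsuperset_card_eq (n := s) hIss (by omega) (by omega)
          obtain ⟨w, hw⟩ := hint G'' (hG''G.trans hG) hG''card
          set u := Submodule.orthogonalProjection U (w - x₀) with huu
          refine ⟨u, Set.mem_iInter₂.mpr fun S hS => ?_⟩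
          have hSG'' : S ∈ G'' := hIG'' hS
          have hSG : S ∈ G := hG''G hSG''
          have h1 : ⟪v S, (u : EuclideanSpace ℝ (Fin d))⟫ = ⟪v S, w - x₀⟫ := by
            have hperp := (Submodule.mem_orthogonal U _).mp
              (Submodule.sub_starProjection_mem_orthogonal (K := U) (w - x₀)) (v S) (hvU S hSG)
            rw [inner_sub_right] at hperp
            change ⟪v S, w - x₀⟫ - ⟪v S, (u : EuclideanSpace ℝ (Fin d))⟫ = 0 at hperp
            linarith
          have hx₀S : ⟪v S, x₀⟫ = a S := htight x₀ hx₀K S hSG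
          have hwS : a S < ⟪v S, w⟫ := hstrict G'' (hG''G.trans hG) w hw S hSG''
          rw [Set.mem_setOf_eq, h1, inner_sub_right, hx₀S]
          linarith
      obtain ⟨u, hu⟩ := hFne
      have hu' : ∀ S ∈ G, (0:ℝ) < ⟪v S, (u : EuclideanSpace ℝ (Fin d))⟫ :=
        fun S hS => Set.mem_iInter₂.mp hu S hS
      apply hA
      refine ⟨x₀ + (u : EuclideanSpace ℝ (Fin d)), ?_, ?_⟩
      · rw [hKmem]
        intro S hS
        rw [inner_add_right, htight x₀ hx₀K S hS]
        linarith [hu' S hS]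
      · intro S hS
        rw [inner_add_right, htight x₀ hx₀K S hS]
        linarith [hu' S hS]
    have hrU : finrank ℝ U = s := le_antisymm hrle hrge
    -- K is the coset x₀ + Uᗮ
    have hKeq : K = ((AffineSubspace.mk' x₀ Uᗮ :
        AffineSubspace ℝ (EuclideanSpace ℝ (Fin d))) : Set (EuclideanSpace ℝ (Fin d))) := by
      ext x
      rw [AffineSubspace.mem_coe, AffineSubspace.mem_mk', vsub_eq_sub]
      constructor
      · intro hx
        rw [Submodule.mem_orthogonal]
        intro w hw
        induction hw using Submodule.span_induction with
        | mem y hy =>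
            simp only [Finset.coe_image, Set.mem_image, Finset.mem_coe] at hy
            obtain ⟨S, hS, rfl⟩ := hy
            rw [inner_sub_right, htight x hx S hS, htight x₀ hx₀K S hS, sub_self]
        | zero => simp
        | add y z hy hz ihy ihz => rw [inner_add_left, ihy, ihz, add_zero]
        | smul c y hy ih => rw [real_inner_smul_left, ih, mul_zero]
      · intro hx
        rw [hKmem]
        intro S hS
        have h0 : ⟪v S, x - x₀⟫ = 0 := (Submodule.mem_orthogonal U _).mp hx (v S) (hvU S hS)
        rw [inner_sub_right] at h0
        rw [htight x₀ hx₀K S hS] at h0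
        linarith
    have hdimK : setDim K = finrank ℝ Uᗮ := by
      rw [hKeq, setDim, AffineSubspace.affineSpan_coe, AffineSubspace.direction_mk']
    have hsum := Submodule.finrank_add_finrank_orthogonal U
    rw [finrank_euclideanSpace_fin] at hsum
    rw [hdimK]
    omega
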